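/- arXiv:1812.04222 — 4 statements merged into one kernel-verified Lean document; each statement's English description precedes it below -/
import Mathlib

section
/- (Følner inequality for amenable fusion rules.) Let (I, 1, ‾, d, N) be a fusion datum, let F, K ⊆ I be finite subsets, let δ > 0, and suppose that K is (F,δ)-invariant. Then Σ_{(X,Y,Z)∈F×K×Kᶜ} d(X)² d(Y)² p_X(Y,Z) = Σ_{(X,Y,Z)∈F×Kᶜ×K} d(X)² d(Y)² p_{X̄}(Y,Z), and this common value is at most δ · |F|_σ · |K|_σ. Here Kᶜ := I ∖ K, and both triple sums have only finitely many nonzero terms. -/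
open scoped BigOperators

/-- A fusion datum, modelling `Irr(C)` of a rigid C*-tensor category together with
its fusion rule. -/
structure FusionDatum where
  /-- the countable index set of simple objects -/
  I : Type
  countable : Countable I
  /-- the unit object -/
  one : I
  /-- conjugation -/
  conj : I → I
  /-- intrinsic dimension -/
  d : I → ℝ
  /-- fusion multiplicities -/
  N : I → I → I → ℕ
  conj_conj : ∀ X, conj (conj X) = X
  conj_one : conj one = one
  one_le_d : ∀ X, 1 ≤ d X
  d_conj : ∀ X, d (conj X) = d X
  N_one_left_self : ∀ Y, N one Y Y = 1
  N_one_left_ne : ∀ Y Z, Y ≠ Z → N one Y Z = 0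
  N_one_right_self : ∀ Y, N Y one Y = 1
  N_one_right_ne : ∀ Y Z, Y ≠ Z → N Y one Z = 0
  mul_support_finite : ∀ X Y, {Z | N X Y Z ≠ 0}.Finite
  dim_rule : ∀ X Y, ∑ᶠ Z, (N X Y Z : ℝ) * d Z = d X * d Y
  frobenius_left : ∀ X Y Z, N X Y Z = N (conj X) Z Y
  frobenius_right : ∀ X Y Z, N X Y Z = N Z (conj Y) X
  assoc : ∀ X Y V Z, ∑ᶠ W, N X Y W * N W V Z = ∑ᶠ U, N Y V U * N X U Z

namespace FusionDatum

variable (𝕀 : FusionDatum)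

/-- transition probability of the fusion random walk -/
noncomputable def p (X Y Z : 𝕀.I) : ℝ :=
  𝕀.d Z * (𝕀.N X Y Z : ℝ) / (𝕀.d X * 𝕀.d Y)

/-- the weighted measure `|F|_σ = Σ_{X∈F} d(X)²` -/
noncomputable def sigma (S : Set 𝕀.I) : ℝ := ∑ᶠ X ∈ S, 𝕀.d X ^ 2

/-- the product set `F·K` -/
def mulSet (F K : Set 𝕀.I) : Set 𝕀.I := {Z | ∃ X ∈ F, ∃ Y ∈ K, 𝕀.N X Y Z ≠ 0}

/-- `F̄ = {X̄ : X ∈ F}` -/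
def conjSet (F : Set 𝕀.I) : Set 𝕀.I := (fun X => 𝕀.conj X) '' F

/-- `K` is `(F,δ)`-invariant when `|(F·K) △ K|_σ ≤ δ·|K|_σ`. -/
def IsInvariant (F K : Set 𝕀.I) (δ : ℝ) : Prop :=
  𝕀.sigma (symmDiff (𝕀.mulSet F K) K) ≤ δ * 𝕀.sigma K

end FusionDatum


namespace FusionDatum

variable (𝕀 : FusionDatum)

lemma d_pos' (X : 𝕀.I) : 0 < 𝕀.d X := lt_of_lt_of_le one_pos (𝕀.one_le_d X)

lemma term_eq' (X Y Z : 𝕀.I) :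
    𝕀.d X ^ 2 * 𝕀.d Y ^ 2 * 𝕀.p X Y Z = 𝕀.d X * 𝕀.d Y * ((𝕀.N X Y Z : ℝ) * 𝕀.d Z) := by
  have hx := (𝕀.d_pos' X).ne'
  have hy := (𝕀.d_pos' Y).ne'
  unfold p
  field_simp

lemma N_conj' (X Y Z : 𝕀.I) : 𝕀.N (𝕀.conj X) Y Z = 𝕀.N X Z Y := by
  rw [𝕀.frobenius_left, 𝕀.conj_conj]

lemma mulSet_finite' {F K : Set 𝕀.I} (hF : F.Finite) (hK : K.Finite) :
    (𝕀.mulSet F K).Finite := by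
  have h : 𝕀.mulSet F K ⊆ ⋃ X ∈ F, ⋃ Y ∈ K, {Z | 𝕀.N X Y Z ≠ 0} := by
    rintro Z ⟨X, hX, Y, hY, h⟩
    exact Set.mem_biUnion hX (Set.mem_biUnion hY h)
  exact ((hF.biUnion fun X _ => hK.biUnion fun Y _ => 𝕀.mul_support_finite X Y)).subset h

lemma row_sum_le' (X Y : 𝕀.I) (t : Finset 𝕀.I) :
    ∑ Z ∈ t, (𝕀.N X Y Z : ℝ) * 𝕀.d Z ≤ 𝕀.d X * 𝕀.d Y := by
  classical
  rw [← 𝕀.dim_rule X Y,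
    finsum_eq_finset_sum_of_support_subset (fun Z => (𝕀.N X Y Z : ℝ) * 𝕀.d Z)
      (s := t ∪ (𝕀.mul_support_finite X Y).toFinset) ?_]
  · refine Finset.sum_le_sum_of_subset_of_nonneg Finset.subset_union_left ?_
    intro Z _ _
    have := (𝕀.d_pos' Z).le
    positivity
  · intro Z hZ
    simp only [Function.mem_support] at hZ
    have hN : 𝕀.N X Y Z ≠ 0 := by
      intro h
      apply hZ
      simp [h]
    simp only [Finset.coe_union, Set.Finite.coe_toFinset, Set.mem_union, Set.mem_setOf_eq]
    exact Or.inr hN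

end FusionDatum

/-- (Følner inequality for amenable fusion rules.) If `K` is
`(F,δ)`-invariant, then
`Σ_{(X,Y,Z)∈F×K×Kᶜ} d(X)² d(Y)² p_X(Y,Z) = Σ_{(X,Y,Z)∈F×Kᶜ×K} d(X)² d(Y)² p_{X̄}(Y,Z)`
and this common value is at most `δ · |F|_σ · |K|_σ`; both triple sums have only
finitely many nonzero terms. -/
theorem fusion_folner_inequality (𝕀 : FusionDatum) (F K : Set 𝕀.I)
    (hF : F.Finite) (hK : K.Finite) (δ : ℝ) (hδ : 0 < δ)
    (hinv : 𝕀.IsInvariant F K δ) :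
    {W : 𝕀.I × 𝕀.I × 𝕀.I |
        W.1 ∈ F ∧ W.2.1 ∈ K ∧ W.2.2 ∉ K ∧ 𝕀.p W.1 W.2.1 W.2.2 ≠ 0}.Finite ∧
    {W : 𝕀.I × 𝕀.I × 𝕀.I |
        W.1 ∈ F ∧ W.2.1 ∉ K ∧ W.2.2 ∈ K ∧ 𝕀.p (𝕀.conj W.1) W.2.1 W.2.2 ≠ 0}.Finite ∧
    (∑ᶠ X ∈ F, ∑ᶠ Y ∈ K, ∑ᶠ Z ∈ Kᶜ, 𝕀.d X ^ 2 * 𝕀.d Y ^ 2 * 𝕀.p X Y Z)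
      = (∑ᶠ X ∈ F, ∑ᶠ Y ∈ Kᶜ, ∑ᶠ Z ∈ K, 𝕀.d X ^ 2 * 𝕀.d Y ^ 2 * 𝕀.p (𝕀.conj X) Y Z) ∧
    (∑ᶠ X ∈ F, ∑ᶠ Y ∈ K, ∑ᶠ Z ∈ Kᶜ, 𝕀.d X ^ 2 * 𝕀.d Y ^ 2 * 𝕀.p X Y Z)
      ≤ δ * 𝕀.sigma F * 𝕀.sigma K := by
  classical
  have hL : (𝕀.mulSet F K).Finite := 𝕀.mulSet_finite' hF hK
  set FF := hF.toFinset with hFF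
  set KK := hK.toFinset with hKK
  set LL := hL.toFinset with hLL
  set DD := LL \ KK with hDD
  have hdpos : ∀ X : 𝕀.I, 0 < 𝕀.d X := 𝕀.d_pos'
  -- membership of the coercion of DD
  have hDDcoe : (DD : Set 𝕀.I) = 𝕀.mulSet F K \ K := by
    simp [hDD, hLL, hKK, Finset.coe_sdiff, Set.Finite.coe_toFinset]
  -- finiteness of the first set
  have fin1 : {W : 𝕀.I × 𝕀.I × 𝕀.I |
      W.1 ∈ F ∧ W.2.1 ∈ K ∧ W.2.2 ∉ K ∧ 𝕀.p W.1 W.2.1 W.2.2 ≠ 0}.Finite := by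
    refine (hF.prod (hK.prod hL)).subset ?_
    rintro ⟨X, Y, Z⟩ ⟨hX, hY, hZ, hp⟩
    have hN : 𝕀.N X Y Z ≠ 0 := by
      intro h
      apply hp
      simp [FusionDatum.p, h]
    exact ⟨hX, hY, X, hX, Y, hY, hN⟩
  have fin2 : {W : 𝕀.I × 𝕀.I × 𝕀.I |
      W.1 ∈ F ∧ W.2.1 ∉ K ∧ W.2.2 ∈ K ∧ 𝕀.p (𝕀.conj W.1) W.2.1 W.2.2 ≠ 0}.Finite := by
    refine (hF.prod (hL.prod hK)).subset ?_
    rintro ⟨X, Y, Z⟩ ⟨hX, hY, hZ, hp⟩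
    have hN : 𝕀.N (𝕀.conj X) Y Z ≠ 0 := by
      intro h
      apply hp
      simp [FusionDatum.p, h]
    rw [𝕀.N_conj'] at hN
    exact ⟨hX, ⟨X, hX, Z, hZ, hN⟩, hZ⟩
  -- rewrite the first triple sum as a finset sum
  have e1 : (∑ᶠ X ∈ F, ∑ᶠ Y ∈ K, ∑ᶠ Z ∈ Kᶜ, 𝕀.d X ^ 2 * 𝕀.d Y ^ 2 * 𝕀.p X Y Z)
      = ∑ X ∈ FF, ∑ Y ∈ KK, ∑ Z ∈ DD, 𝕀.d X * 𝕀.d Y * ((𝕀.N X Y Z : ℝ) * 𝕀.d Z) := by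
    rw [finsum_mem_eq_finite_toFinset_sum _ hF]
    refine Finset.sum_congr rfl fun X hX => ?_
    rw [finsum_mem_eq_finite_toFinset_sum _ hK]
    refine Finset.sum_congr rfl fun Y hY => ?_
    rw [hFF] at hX; rw [hKK] at hY
    rw [Set.Finite.mem_toFinset] at hX hY
    rw [finsum_mem_eq_sum_of_inter_support_eq _ (t := DD) ?_]
    · exact Finset.sum_congr rfl fun Z _ => 𝕀.term_eq' X Y Z
    · ext Z
      simp only [Set.mem_inter_iff, Set.mem_compl_iff, Function.mem_support, hDDcoe,
        Set.mem_diff]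
      constructor
      · rintro ⟨hZK, hne⟩
        have hN : 𝕀.N X Y Z ≠ 0 := by
          intro h
          apply hne
          simp [FusionDatum.p, h]
        exact ⟨⟨⟨X, hX, Y, hY, hN⟩, hZK⟩, hne⟩
      · rintro ⟨⟨_, hZK⟩, hne⟩
        exact ⟨hZK, hne⟩
  -- rewrite the second triple sum as a finset sum
  have e2 : (∑ᶠ X ∈ F, ∑ᶠ Y ∈ Kᶜ, ∑ᶠ Z ∈ K, 𝕀.d X ^ 2 * 𝕀.d Y ^ 2 * 𝕀.p (𝕀.conj X) Y Z)
      = ∑ X ∈ FF, ∑ Y ∈ DD, ∑ Z ∈ KK, 𝕀.d X * 𝕀.d Y * ((𝕀.N X Z Y : ℝ) * 𝕀.d Z) := by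
    rw [finsum_mem_eq_finite_toFinset_sum _ hF]
    refine Finset.sum_congr rfl fun X hX => ?_
    rw [hFF, Set.Finite.mem_toFinset] at hX
    have hYrw : ∀ Y : 𝕀.I, (∑ᶠ Z ∈ K, 𝕀.d X ^ 2 * 𝕀.d Y ^ 2 * 𝕀.p (𝕀.conj X) Y Z)
        = ∑ Z ∈ KK, 𝕀.d X * 𝕀.d Y * ((𝕀.N X Z Y : ℝ) * 𝕀.d Z) := by
      intro Y
      rw [finsum_mem_eq_finite_toFinset_sum _ hK]
      refine Finset.sum_congr rfl fun Z _ => ?_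
      have h := 𝕀.term_eq' (𝕀.conj X) Y Z
      rw [𝕀.d_conj, 𝕀.N_conj'] at h
      exact h
    simp only [hYrw]
    rw [finsum_mem_eq_sum_of_inter_support_eq _ (t := DD) ?_]
    ext Y
    simp only [Set.mem_inter_iff, Set.mem_compl_iff, Function.mem_support, hDDcoe,
      Set.mem_diff]
    constructor
    · rintro ⟨hYK, hne⟩
      obtain ⟨Z, hZ, hZne⟩ := Finset.exists_ne_zero_of_sum_ne_zero hne
      have hN : 𝕀.N X Z Y ≠ 0 := by
        intro h
        apply hZne
        simp [h]
      rw [hKK, Set.Finite.mem_toFinset] at hZ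
      exact ⟨⟨⟨X, hX, Z, hZ, hN⟩, hYK⟩, hne⟩
    · rintro ⟨⟨_, hYK⟩, hne⟩
      exact ⟨hYK, hne⟩
  -- the two finset sums agree
  have eq12 : (∑ X ∈ FF, ∑ Y ∈ KK, ∑ Z ∈ DD, 𝕀.d X * 𝕀.d Y * ((𝕀.N X Y Z : ℝ) * 𝕀.d Z))
      = ∑ X ∈ FF, ∑ Y ∈ DD, ∑ Z ∈ KK, 𝕀.d X * 𝕀.d Y * ((𝕀.N X Z Y : ℝ) * 𝕀.d Z) := by
    refine Finset.sum_congr rfl fun X _ => ?_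
    rw [Finset.sum_comm]
    refine Finset.sum_congr rfl fun Z _ => Finset.sum_congr rfl fun Y _ => ?_
    ring
  -- the symmetric difference is finite
  have hsd : (symmDiff (𝕀.mulSet F K) K).Finite := by
    refine (hL.union hK).subset ?_
    intro Z hZ
    rw [Set.mem_symmDiff] at hZ
    rcases hZ with ⟨h, _⟩ | ⟨h, _⟩
    · exact Or.inl h
    · exact Or.inr h
  have hsigsd : 𝕀.sigma (symmDiff (𝕀.mulSet F K) K) = ∑ Z ∈ hsd.toFinset, 𝕀.d Z ^ 2 :=
    finsum_mem_eq_finite_toFinset_sum _ hsd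
  have hDDle : ∑ Z ∈ DD, 𝕀.d Z ^ 2 ≤ 𝕀.sigma (symmDiff (𝕀.mulSet F K) K) := by
    rw [hsigsd]
    refine Finset.sum_le_sum_of_subset_of_nonneg ?_ (fun Z _ _ => by positivity)
    intro Z hZ
    rw [Set.Finite.mem_toFinset, Set.mem_symmDiff]
    have : Z ∈ (DD : Set 𝕀.I) := hZ
    rw [hDDcoe] at this
    exact Or.inl ⟨this.1, this.2⟩
  have hsigF : 𝕀.sigma F = ∑ X ∈ FF, 𝕀.d X ^ 2 := finsum_mem_eq_finite_toFinset_sum _ hF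
  have hsigF0 : 0 ≤ 𝕀.sigma F := by
    rw [hsigF]
    exact Finset.sum_nonneg fun X _ => by positivity
  -- the bound
  have hbound : (∑ X ∈ FF, ∑ Y ∈ KK, ∑ Z ∈ DD, 𝕀.d X * 𝕀.d Y * ((𝕀.N X Y Z : ℝ) * 𝕀.d Z))
      ≤ δ * 𝕀.sigma F * 𝕀.sigma K := by
    have step1 : ∀ X ∈ FF, (∑ Y ∈ KK, ∑ Z ∈ DD, 𝕀.d X * 𝕀.d Y * ((𝕀.N X Y Z : ℝ) * 𝕀.d Z))
        ≤ 𝕀.d X ^ 2 * ∑ Z ∈ DD, 𝕀.d Z ^ 2 := by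
      intro X _
      rw [Finset.sum_comm, Finset.mul_sum]
      refine Finset.sum_le_sum fun Z _ => ?_
      have h1 : (∑ Y ∈ KK, 𝕀.d X * 𝕀.d Y * ((𝕀.N X Y Z : ℝ) * 𝕀.d Z))
          = 𝕀.d X * 𝕀.d Z * ∑ Y ∈ KK, (𝕀.N (𝕀.conj X) Z Y : ℝ) * 𝕀.d Y := by
        rw [Finset.mul_sum]
        refine Finset.sum_congr rfl fun Y _ => ?_
        rw [← 𝕀.frobenius_left]
        ring
      rw [h1]
      have h2 : (∑ Y ∈ KK, (𝕀.N (𝕀.conj X) Z Y : ℝ) * 𝕀.d Y) ≤ 𝕀.d X * 𝕀.d Z := by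
        have := 𝕀.row_sum_le' (𝕀.conj X) Z KK
        rwa [𝕀.d_conj] at this
      calc 𝕀.d X * 𝕀.d Z * ∑ Y ∈ KK, (𝕀.N (𝕀.conj X) Z Y : ℝ) * 𝕀.d Y
          ≤ 𝕀.d X * 𝕀.d Z * (𝕀.d X * 𝕀.d Z) := by
            refine mul_le_mul_of_nonneg_left h2 ?_
            have := (hdpos X).le; have := (hdpos Z).le
            positivity
        _ = 𝕀.d X ^ 2 * 𝕀.d Z ^ 2 := by ring
    calc (∑ X ∈ FF, ∑ Y ∈ KK, ∑ Z ∈ DD, 𝕀.d X * 𝕀.d Y * ((𝕀.N X Y Z : ℝ) * 𝕀.d Z))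
        ≤ ∑ X ∈ FF, 𝕀.d X ^ 2 * ∑ Z ∈ DD, 𝕀.d Z ^ 2 := Finset.sum_le_sum step1
      _ = (∑ X ∈ FF, 𝕀.d X ^ 2) * ∑ Z ∈ DD, 𝕀.d Z ^ 2 := by rw [← Finset.sum_mul]
      _ ≤ (∑ X ∈ FF, 𝕀.d X ^ 2) * (δ * 𝕀.sigma K) := by
          refine mul_le_mul_of_nonneg_left (le_trans hDDle hinv) ?_
          exact Finset.sum_nonneg fun X _ => by positivity
      _ = δ * 𝕀.sigma F * 𝕀.sigma K := by rw [← hsigF]; ring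
  exact ⟨fin1, fin2, by rw [e1, e2, eq12], by rw [e1]; exact hbound⟩
end

section
/- (Submultiplicativity of the weighted measure σ.) Let (I_rs, 1_r, ‾, d, N) be a 2-graded fusion datum over Λ = {0,1}, let r, s, t ∈ Λ, and let F ⊆ I_rs and G ⊆ I_st be finite subsets. Then |F·G|_σ ≤ |F|_σ · |G|_σ. -/
open scoped BigOperators

/-- A 2-graded fusion datum over `Λ = {0,1}`, modelling the sets `Irr(C_rs)` of
isomorphism classes of simple 1-morphisms of a rigid C*-2-category. -/
structure GradedFusionDatum where
  /-- the countable index sets of simple 1-morphisms -/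
  I : Fin 2 → Fin 2 → Type
  countable : ∀ r s, Countable (I r s)
  nonemptyI : ∀ r s, Nonempty (I r s)
  /-- the unit objects -/
  one : ∀ r, I r r
  /-- conjugation -/
  conj : ∀ {r s}, I r s → I s r
  /-- intrinsic dimension -/
  d : ∀ {r s}, I r s → ℝ
  /-- fusion multiplicities -/
  N : ∀ {r s t}, I r s → I s t → I r t → ℕ
  conj_conj : ∀ {r s} (X : I r s), conj (conj X) = X
  conj_one : ∀ r, conj (one r) = one r
  one_le_d : ∀ {r s} (X : I r s), 1 ≤ d X
  d_conj : ∀ {r s} (X : I r s), d (conj X) = d X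
  N_one_left_self : ∀ {r s} (Y : I r s), N (one r) Y Y = 1
  N_one_left_ne : ∀ {r s} (Y Z : I r s), Y ≠ Z → N (one r) Y Z = 0
  N_one_right_self : ∀ {r s} (Y : I r s), N Y (one s) Y = 1
  N_one_right_ne : ∀ {r s} (Y Z : I r s), Y ≠ Z → N Y (one s) Z = 0
  mul_support_finite : ∀ {r s t} (X : I r s) (Y : I s t), {Z : I r t | N X Y Z ≠ 0}.Finite
  dim_rule : ∀ {r s t} (X : I r s) (Y : I s t),
    ∑ᶠ Z : I r t, (N X Y Z : ℝ) * d Z = d X * d Y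
  frobenius_left : ∀ {r s t} (X : I r s) (Y : I s t) (Z : I r t), N X Y Z = N (conj X) Z Y
  frobenius_right : ∀ {r s t} (X : I r s) (Y : I s t) (Z : I r t), N X Y Z = N Z (conj Y) X
  assoc : ∀ {r s t u} (X : I r s) (Y : I s t) (V : I t u) (Z : I r u),
    ∑ᶠ W : I r t, N X Y W * N W V Z = ∑ᶠ U : I s u, N Y V U * N X U Z

namespace GradedFusionDatum

variable (𝕀 : GradedFusionDatum)

/-- transition probability of the fusion random walk -/
noncomputable def p {r s t : Fin 2} (X : 𝕀.I r s) (Y : 𝕀.I s t) (Z : 𝕀.I r t) : ℝ :=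
  𝕀.d Z * (𝕀.N X Y Z : ℝ) / (𝕀.d X * 𝕀.d Y)

/-- the weighted measure `|F|_σ = Σ_{X∈F} d(X)²` -/
noncomputable def sigma {r s : Fin 2} (S : Set (𝕀.I r s)) : ℝ := ∑ᶠ X ∈ S, 𝕀.d X ^ 2

/-- the product set `F·K` -/
def mulSet {r s t : Fin 2} (F : Set (𝕀.I r s)) (K : Set (𝕀.I s t)) : Set (𝕀.I r t) :=
  {Z | ∃ X ∈ F, ∃ Y ∈ K, 𝕀.N X Y Z ≠ 0}

/-- `F̄ = {X̄ : X ∈ F}` -/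
def conjSet {r s : Fin 2} (F : Set (𝕀.I r s)) : Set (𝕀.I s r) :=
  (fun X => 𝕀.conj X) '' F

/-- Amenability: every finite subset of `I 0 0` admits nonempty finite
`(F,δ)`-invariant sets. -/
def Amenable : Prop :=
  ∀ F : Set (𝕀.I 0 0), F.Finite → ∀ δ : ℝ, 0 < δ →
    ∃ K : Set (𝕀.I 0 0), K.Finite ∧ K.Nonempty ∧
      𝕀.sigma (symmDiff (𝕀.mulSet F K) K) ≤ δ * 𝕀.sigma K

end GradedFusionDatum

private lemma sum_union_le_real {α : Type*} [DecidableEq α] (A B : Finset α) (f : α → ℝ)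
    (hf : ∀ a, 0 ≤ f a) : ∑ a ∈ A ∪ B, f a ≤ ∑ a ∈ A, f a + ∑ a ∈ B, f a := by
  have h := Finset.sum_union_inter (s₁ := A) (s₂ := B) (f := f)
  have : 0 ≤ ∑ a ∈ A ∩ B, f a := Finset.sum_nonneg fun a _ => hf a
  linarith

private lemma sum_biUnion_le_real {ι α : Type*} [DecidableEq α] (s : Finset ι)
    (t : ι → Finset α) (f : α → ℝ) (hf : ∀ a, 0 ≤ f a) :
    ∑ a ∈ s.biUnion t, f a ≤ ∑ i ∈ s, ∑ a ∈ t i, f a := by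
  classical
  induction s using Finset.induction_on with
  | empty => simp
  | insert i s hi ih =>
    rw [Finset.biUnion_insert, Finset.sum_insert hi]
    exact le_trans (sum_union_le_real _ _ _ hf) (by linarith)

private lemma gfd_d_pos (𝕀 : GradedFusionDatum) {a b : Fin 2} (X : 𝕀.I a b) : 0 < 𝕀.d X :=
  lt_of_lt_of_le one_pos (𝕀.one_le_d X)

private lemma gfd_support_subset (𝕀 : GradedFusionDatum) {a b c : Fin 2}
    (X : 𝕀.I a b) (Y : 𝕀.I b c) :
    (Function.support fun Z : 𝕀.I a c => (𝕀.N X Y Z : ℝ) * 𝕀.d Z) ⊆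
      {Z : 𝕀.I a c | 𝕀.N X Y Z ≠ 0} := by
  intro W hW
  simp only [Function.mem_support] at hW
  intro h0
  simp [h0] at hW

private lemma gfd_d_le (𝕀 : GradedFusionDatum) {a b c : Fin 2} (X : 𝕀.I a b) (Y : 𝕀.I b c)
    (Z : 𝕀.I a c) (h : 𝕀.N X Y Z ≠ 0) : 𝕀.d Z ≤ 𝕀.d X * 𝕀.d Y := by
  have hsupp : (Function.support fun Z : 𝕀.I a c => (𝕀.N X Y Z : ℝ) * 𝕀.d Z).Finite :=
    (𝕀.mul_support_finite X Y).subset (gfd_support_subset 𝕀 X Y)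
  have hnn : ∀ W : 𝕀.I a c, 0 ≤ (𝕀.N X Y W : ℝ) * 𝕀.d W := fun W =>
    mul_nonneg (Nat.cast_nonneg _) (gfd_d_pos 𝕀 W).le
  have hle := single_le_finsum Z hsupp hnn
  rw [𝕀.dim_rule X Y] at hle
  calc 𝕀.d Z = 1 * 𝕀.d Z := (one_mul _).symm
    _ ≤ (𝕀.N X Y Z : ℝ) * 𝕀.d Z :=
        mul_le_mul_of_nonneg_right (by exact_mod_cast Nat.one_le_iff_ne_zero.2 h)
          (gfd_d_pos 𝕀 Z).le
    _ ≤ 𝕀.d X * 𝕀.d Y := hle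

private lemma gfd_local (𝕀 : GradedFusionDatum) {a b c : Fin 2} (X : 𝕀.I a b) (Y : 𝕀.I b c) :
    ∑ Z ∈ (𝕀.mul_support_finite X Y).toFinset, 𝕀.d Z ^ 2 ≤ (𝕀.d X * 𝕀.d Y) ^ 2 := by
  have key : ∑ Z ∈ (𝕀.mul_support_finite X Y).toFinset, (𝕀.N X Y Z : ℝ) * 𝕀.d Z
      = 𝕀.d X * 𝕀.d Y := by
    rw [← 𝕀.dim_rule X Y]
    symm
    apply finsum_eq_sum_of_support_subset
    intro W hW
    rw [Set.Finite.coe_toFinset]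
    exact gfd_support_subset 𝕀 X Y hW
  calc ∑ Z ∈ (𝕀.mul_support_finite X Y).toFinset, 𝕀.d Z ^ 2
      ≤ ∑ Z ∈ (𝕀.mul_support_finite X Y).toFinset,
          ((𝕀.N X Y Z : ℝ) * 𝕀.d Z) * (𝕀.d X * 𝕀.d Y) := by
        apply Finset.sum_le_sum
        intro Z hZ
        have hN : 𝕀.N X Y Z ≠ 0 := by
          simpa using (Set.Finite.mem_toFinset _).1 hZ
        have h1 : 𝕀.d Z ≤ (𝕀.N X Y Z : ℝ) * 𝕀.d Z := by
          nth_rewrite 1 [← one_mul (𝕀.d Z)]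
          gcongr
          · exact (gfd_d_pos 𝕀 Z).le
          · exact_mod_cast Nat.one_le_iff_ne_zero.2 hN
        have h2 : 𝕀.d Z ≤ 𝕀.d X * 𝕀.d Y := gfd_d_le 𝕀 X Y Z hN
        calc 𝕀.d Z ^ 2 = 𝕀.d Z * 𝕀.d Z := sq (𝕀.d Z)
          _ ≤ ((𝕀.N X Y Z : ℝ) * 𝕀.d Z) * (𝕀.d X * 𝕀.d Y) :=
            mul_le_mul h1 h2 (gfd_d_pos 𝕀 Z).le
              (mul_nonneg (Nat.cast_nonneg _) (gfd_d_pos 𝕀 Z).le)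
    _ = (∑ Z ∈ (𝕀.mul_support_finite X Y).toFinset, (𝕀.N X Y Z : ℝ) * 𝕀.d Z)
          * (𝕀.d X * 𝕀.d Y) := (Finset.sum_mul _ _ _).symm
    _ = (𝕀.d X * 𝕀.d Y) ^ 2 := by rw [key]; ring

/-- (Submultiplicativity of the weighted measure σ.)
For finite `F ⊆ I_rs` and `G ⊆ I_st`, `|F·G|_σ ≤ |F|_σ · |G|_σ`. -/
theorem graded_sigma_submultiplicative (𝕀 : GradedFusionDatum) (r s t : Fin 2)
    (F : Set (𝕀.I r s)) (G : Set (𝕀.I s t)) (hF : F.Finite) (hG : G.Finite) :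
    𝕀.sigma (𝕀.mulSet F G) ≤ 𝕀.sigma F * 𝕀.sigma G := by
  classical
  have hFG : (𝕀.mulSet F G).Finite := by
    apply Set.Finite.subset (Set.Finite.biUnion hF fun X _ =>
      Set.Finite.biUnion hG fun Y _ => 𝕀.mul_support_finite X Y)
    rintro Z ⟨X, hX, Y, hY, h⟩
    exact Set.mem_biUnion hX (Set.mem_biUnion hY h)
  have e1 : 𝕀.sigma (𝕀.mulSet F G) = ∑ Z ∈ hFG.toFinset, 𝕀.d Z ^ 2 := by
    exact finsum_mem_eq_finite_toFinset_sum _ hFG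
  have e2 : 𝕀.sigma F = ∑ X ∈ hF.toFinset, 𝕀.d X ^ 2 := by
    exact finsum_mem_eq_finite_toFinset_sum _ hF
  have e3 : 𝕀.sigma G = ∑ Y ∈ hG.toFinset, 𝕀.d Y ^ 2 := by
    exact finsum_mem_eq_finite_toFinset_sum _ hG
  rw [e1, e2, e3]
  have hnn : ∀ Z : 𝕀.I r t, 0 ≤ 𝕀.d Z ^ 2 := fun Z => sq_nonneg _
  calc ∑ Z ∈ hFG.toFinset, 𝕀.d Z ^ 2
      ≤ ∑ Z ∈ (hF.toFinset ×ˢ hG.toFinset).biUnion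
          (fun p => (𝕀.mul_support_finite p.1 p.2).toFinset), 𝕀.d Z ^ 2 := by
        apply Finset.sum_le_sum_of_subset_of_nonneg
        · intro Z hZ
          obtain ⟨X, hX, Y, hY, h⟩ := hFG.mem_toFinset.1 hZ
          exact Finset.mem_biUnion.2 ⟨(X, Y),
            Finset.mem_product.2 ⟨hF.mem_toFinset.2 hX, hG.mem_toFinset.2 hY⟩,
            (𝕀.mul_support_finite X Y).mem_toFinset.2 h⟩
        · intro Z _ _; exact hnn Z
    _ ≤ ∑ p ∈ hF.toFinset ×ˢ hG.toFinset,
          ∑ Z ∈ (𝕀.mul_support_finite p.1 p.2).toFinset, 𝕀.d Z ^ 2 :=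
        sum_biUnion_le_real _ _ _ hnn
    _ ≤ ∑ p ∈ hF.toFinset ×ˢ hG.toFinset, (𝕀.d p.1 * 𝕀.d p.2) ^ 2 :=
        Finset.sum_le_sum fun p _ => gfd_local 𝕀 p.1 p.2
    _ = (∑ X ∈ hF.toFinset, 𝕀.d X ^ 2) * ∑ Y ∈ hG.toFinset, 𝕀.d Y ^ 2 := by
        rw [Finset.sum_mul_sum]
        rw [Finset.sum_product]
        congr 1
        ext X
        congr 1
        ext Y
        ring
end

section
/- (Generation of the corner pieces from the off-diagonal piece.) Let (I_rs, 1_r, ‾, d, N) be a 2-graded fusion datum over Λ = {0,1}. Then: (a) for every X ∈ I_00 and every Y ∈ I_10 there exists Z ∈ I_10 with N_{Ȳ,Z}^X ≠ 0, and for every X ∈ I_11 and every Y ∈ I_10 there exists Z ∈ I_10 with N_{Z,Ȳ}^X ≠ 0; (b) consequently, for any finite subsets F_00 ⊆ I_00, F_10 ⊆ I_10, F_01 ⊆ I_01, F_11 ⊆ I_11 there exists a nonempty finite subset G ⊆ I_10 such that F_00 ⊆ Ḡ·G, F_10 ⊆ G, F_01 ⊆ Ḡ, and F_11 ⊆ G·Ḡ.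 -/
open scoped BigOperators

/-- (Generation of the corner pieces from the off-diagonal piece.)
(a) every `X ∈ I_00` (resp. `X ∈ I_11`) appears in some `Ȳ ⊗ Z` (resp. `Z ⊗ Ȳ`)
with `Z ∈ I_10`; (b) any finite subsets `F_rs` are contained in the pieces
generated by a single nonempty finite `G ⊆ I_10`. -/
theorem graded_corner_generation (𝕀 : GradedFusionDatum) :
    ((∀ (X : 𝕀.I 0 0) (Y : 𝕀.I 1 0), ∃ Z : 𝕀.I 1 0, 𝕀.N (𝕀.conj Y) Z X ≠ 0) ∧
     (∀ (X : 𝕀.I 1 1) (Y : 𝕀.I 1 0), ∃ Z : 𝕀.I 1 0, 𝕀.N Z (𝕀.conj Y) X ≠ 0)) ∧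
    (∀ (F00 : Set (𝕀.I 0 0)) (F10 : Set (𝕀.I 1 0))
       (F01 : Set (𝕀.I 0 1)) (F11 : Set (𝕀.I 1 1)),
      F00.Finite → F10.Finite → F01.Finite → F11.Finite →
      ∃ G : Set (𝕀.I 1 0), G.Finite ∧ G.Nonempty ∧
        F00 ⊆ 𝕀.mulSet (𝕀.conjSet G) G ∧ F10 ⊆ G ∧
        F01 ⊆ 𝕀.conjSet G ∧ F11 ⊆ 𝕀.mulSet G (𝕀.conjSet G)) := by
  classical
  -- key: any product is nonempty
  have key : ∀ {r s t : Fin 2} (X : 𝕀.I r s) (Y : 𝕀.I s t), ∃ Z, 𝕀.N X Y Z ≠ 0 := by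
    intro r s t X Y
    by_contra h
    push_neg at h
    have hsum := 𝕀.dim_rule X Y
    have hz : ∑ᶠ Z : 𝕀.I r t, (𝕀.N X Y Z : ℝ) * 𝕀.d Z = 0 := by
      have : ∀ Z : 𝕀.I r t, (𝕀.N X Y Z : ℝ) * 𝕀.d Z = 0 := by
        intro Z; rw [h Z]; simp
      simp [this]
    rw [hz] at hsum
    have h1 := 𝕀.one_le_d X
    have h2 := 𝕀.one_le_d Y
    nlinarith
  have parta : ∀ (X : 𝕀.I 0 0) (Y : 𝕀.I 1 0), ∃ Z : 𝕀.I 1 0, 𝕀.N (𝕀.conj Y) Z X ≠ 0 := by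
    intro X Y
    obtain ⟨Z, hZ⟩ := key Y X
    exact ⟨Z, by rwa [← 𝕀.frobenius_left]⟩
  have partb : ∀ (X : 𝕀.I 1 1) (Y : 𝕀.I 1 0), ∃ Z : 𝕀.I 1 0, 𝕀.N Z (𝕀.conj Y) X ≠ 0 := by
    intro X Y
    obtain ⟨Z, hZ⟩ := key X Y
    exact ⟨Z, by rwa [← 𝕀.frobenius_right]⟩
  refine ⟨⟨parta, partb⟩, ?_⟩
  intro F00 F10 F01 F11 h00 h10 h01 h11
  obtain ⟨Y0⟩ := 𝕀.nonemptyI 1 0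
  choose z0 hz0 using fun X : 𝕀.I 0 0 => parta X Y0
  choose z1 hz1 using fun X : 𝕀.I 1 1 => partb X Y0
  refine ⟨{Y0} ∪ F10 ∪ (𝕀.conj '' F01) ∪ (z0 '' F00) ∪ (z1 '' F11), ?_, ?_, ?_, ?_, ?_, ?_⟩
  · exact ((((Set.finite_singleton Y0).union h10).union (h01.image _)).union
      (h00.image _)).union (h11.image _)
  · exact ⟨Y0, by simp⟩
  · intro X hX
    refine ⟨𝕀.conj Y0, ⟨Y0, by simp, rfl⟩, z0 X, ?_, hz0 X⟩
    simp [Set.mem_image_of_mem _ hX]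
  · intro X hX; simp [hX]
  · intro X hX
    exact ⟨𝕀.conj X, by simp [Set.mem_image_of_mem _ hX], 𝕀.conj_conj X⟩
  · intro X hX
    refine ⟨z1 X, ?_, 𝕀.conj Y0, ⟨Y0, by simp, rfl⟩, hz1 X⟩
    simp [Set.mem_image_of_mem _ hX]
end

section
/- (Graded Følner-type inequality.) Let (I_rs, 1_r, ‾, d, N) be a 2-graded fusion datum over Λ = {0,1}, let r, s ∈ Λ, let δ > 0, and let F ⊆ I_rs, K ⊆ I_s0 and L ⊆ I_r0 be finite subsets such that |(F·K) ∖ L|_σ ≤ δ · |L|_σ and |(F̄·L) ∖ K|_σ ≤ δ · |K|_σ. Then Σ_{(X,Y,Z)∈F×K×(I_r0∖L)} d(X)² d(Y)² p_X(Y,Z) ≤ δ · |F|_σ · |L|_σ and Σ_{(X,Y,Z)∈F×(I_s0∖K)×L} d(X)² d(Y)² p_X(Y,Z) ≤ δ · |F|_σ · |K|_σ, where both triple sums have only finitely many nonzero terms. -/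
open scoped BigOperators

namespace GradedFusionDatum

variable (𝕀 : GradedFusionDatum)

lemma d_pos' {r s : Fin 2} (X : 𝕀.I r s) : 0 < 𝕀.d X :=
  lt_of_lt_of_le one_pos (𝕀.one_le_d X)

lemma d_nonneg' {r s : Fin 2} (X : 𝕀.I r s) : 0 ≤ 𝕀.d X := (𝕀.d_pos' X).le

lemma term_eq' {r s t : Fin 2} (X : 𝕀.I r s) (Y : 𝕀.I s t) (Z : 𝕀.I r t) :
    𝕀.d X ^ 2 * 𝕀.d Y ^ 2 * 𝕀.p X Y Z = 𝕀.d X * 𝕀.d Y * (𝕀.d Z * (𝕀.N X Y Z : ℝ)) := by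
  have hX := (𝕀.d_pos' X).ne'
  have hY := (𝕀.d_pos' Y).ne'
  unfold GradedFusionDatum.p
  field_simp

lemma term_nonneg' {r s t : Fin 2} (X : 𝕀.I r s) (Y : 𝕀.I s t) (Z : 𝕀.I r t) :
    0 ≤ 𝕀.d X * 𝕀.d Y * (𝕀.d Z * (𝕀.N X Y Z : ℝ)) := by
  have h1 := 𝕀.d_nonneg' X
  have h2 := 𝕀.d_nonneg' Y
  have h3 := 𝕀.d_nonneg' Z
  have h4 : (0:ℝ) ≤ (𝕀.N X Y Z : ℝ) := Nat.cast_nonneg _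
  positivity

lemma N_conj_ne' {r s t : Fin 2} {X : 𝕀.I r s} {Y : 𝕀.I s t} {Z : 𝕀.I r t}
    (h : 𝕀.N X Y Z ≠ 0) : 𝕀.N (𝕀.conj X) Z Y ≠ 0 := by
  rwa [← 𝕀.frobenius_left]

lemma sigma_eq_sum' {r s : Fin 2} {S : Set (𝕀.I r s)} (hS : S.Finite) :
    𝕀.sigma S = ∑ X ∈ hS.toFinset, 𝕀.d X ^ 2 :=
  finsum_mem_eq_finite_toFinset_sum _ hS

lemma sigma_nonneg_fin' {r s : Fin 2} {S : Set (𝕀.I r s)} (hS : S.Finite) :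
    0 ≤ 𝕀.sigma S := by
  rw [𝕀.sigma_eq_sum' hS]
  exact Finset.sum_nonneg fun X _ => sq_nonneg _

lemma mulSet_finite' {r s t : Fin 2} {F : Set (𝕀.I r s)} {K : Set (𝕀.I s t)}
    (hF : F.Finite) (hK : K.Finite) : (𝕀.mulSet F K).Finite := by
  have hsub : 𝕀.mulSet F K ⊆ ⋃ X ∈ F, ⋃ Y ∈ K, {Z | 𝕀.N X Y Z ≠ 0} := by
    rintro Z ⟨X, hX, Y, hY, h⟩
    exact Set.mem_biUnion hX (Set.mem_biUnion hY h)
  exact ((hF.biUnion fun X _ => hK.biUnion fun Y _ =>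
    𝕀.mul_support_finite X Y)).subset hsub

lemma row_bound' {r s t : Fin 2} (X : 𝕀.I r s) (Z : 𝕀.I r t) (K : Finset (𝕀.I s t)) :
    ∑ Y ∈ K, (𝕀.N X Y Z : ℝ) * 𝕀.d Y ≤ 𝕀.d X * 𝕀.d Z := by
  classical
  set f : 𝕀.I s t → ℝ := fun Y => (𝕀.N (𝕀.conj X) Z Y : ℝ) * 𝕀.d Y with hf
  have hnn : ∀ Y, 0 ≤ f Y := fun Y =>
    mul_nonneg (Nat.cast_nonneg _) (𝕀.d_nonneg' Y)
  have hsupp : (Function.support f).Finite := by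
    apply (𝕀.mul_support_finite (𝕀.conj X) Z).subset
    intro Y hY
    simp only [Function.mem_support, hf] at hY
    intro h
    exact hY (by rw [h]; simp)
  have hdim : ∑ Y ∈ hsupp.toFinset, f Y = 𝕀.d X * 𝕀.d Z := by
    rw [← finsum_eq_sum f hsupp]
    have h := 𝕀.dim_rule (𝕀.conj X) Z
    rwa [𝕀.d_conj] at h
  calc ∑ Y ∈ K, (𝕀.N X Y Z : ℝ) * 𝕀.d Y
      = ∑ Y ∈ K, f Y := by
        refine Finset.sum_congr rfl fun Y _ => ?_
        rw [hf, 𝕀.frobenius_left]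
    _ = ∑ Y ∈ K ∩ hsupp.toFinset, f Y := by
        refine (Finset.sum_subset Finset.inter_subset_left ?_).symm
        intro Y hY hY2
        by_contra h
        exact hY2 (Finset.mem_inter.mpr ⟨hY, hsupp.mem_toFinset.mpr h⟩)
    _ ≤ ∑ Y ∈ hsupp.toFinset, f Y :=
        Finset.sum_le_sum_of_subset_of_nonneg Finset.inter_subset_right
          fun Y _ _ => hnn Y
    _ = 𝕀.d X * 𝕀.d Z := hdim

lemma core_bound' {r s t : Fin 2} (F : Finset (𝕀.I r s)) (K : Finset (𝕀.I s t))
    (T : Finset (𝕀.I r t)) :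
    ∑ X ∈ F, ∑ Y ∈ K, ∑ Z ∈ T, 𝕀.d X * 𝕀.d Y * (𝕀.d Z * (𝕀.N X Y Z : ℝ))
      ≤ (∑ X ∈ F, 𝕀.d X ^ 2) * ∑ Z ∈ T, 𝕀.d Z ^ 2 := by
  have key : ∀ (X : 𝕀.I r s) (Z : 𝕀.I r t),
      ∑ Y ∈ K, 𝕀.d X * 𝕀.d Y * (𝕀.d Z * (𝕀.N X Y Z : ℝ)) ≤ 𝕀.d X ^ 2 * 𝕀.d Z ^ 2 := by
    intro X Z
    have e : ∑ Y ∈ K, 𝕀.d X * 𝕀.d Y * (𝕀.d Z * (𝕀.N X Y Z : ℝ))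
        = (𝕀.d X * 𝕀.d Z) * ∑ Y ∈ K, (𝕀.N X Y Z : ℝ) * 𝕀.d Y := by
      rw [Finset.mul_sum]
      exact Finset.sum_congr rfl fun Y _ => by ring
    rw [e]
    have hnn : 0 ≤ 𝕀.d X * 𝕀.d Z := mul_nonneg (𝕀.d_nonneg' X) (𝕀.d_nonneg' Z)
    calc (𝕀.d X * 𝕀.d Z) * ∑ Y ∈ K, (𝕀.N X Y Z : ℝ) * 𝕀.d Y
        ≤ (𝕀.d X * 𝕀.d Z) * (𝕀.d X * 𝕀.d Z) :=
          mul_le_mul_of_nonneg_left (𝕀.row_bound' X Z K) hnn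
      _ = 𝕀.d X ^ 2 * 𝕀.d Z ^ 2 := by ring
  calc ∑ X ∈ F, ∑ Y ∈ K, ∑ Z ∈ T, 𝕀.d X * 𝕀.d Y * (𝕀.d Z * (𝕀.N X Y Z : ℝ))
      = ∑ X ∈ F, ∑ Z ∈ T, ∑ Y ∈ K, 𝕀.d X * 𝕀.d Y * (𝕀.d Z * (𝕀.N X Y Z : ℝ)) :=
        Finset.sum_congr rfl fun X _ => Finset.sum_comm
    _ ≤ ∑ X ∈ F, ∑ Z ∈ T, 𝕀.d X ^ 2 * 𝕀.d Z ^ 2 :=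
        Finset.sum_le_sum fun X _ => Finset.sum_le_sum fun Z _ => key X Z
    _ = (∑ X ∈ F, 𝕀.d X ^ 2) * ∑ Z ∈ T, 𝕀.d Z ^ 2 := by
        rw [Finset.sum_mul]
        exact Finset.sum_congr rfl fun X _ => by rw [Finset.mul_sum]

end GradedFusionDatum


/-- (Graded Følner-type inequality.) If finite sets `F ⊆ I_rs`,
`K ⊆ I_s0`, `L ⊆ I_r0` satisfy `|(F·K) ∖ L|_σ ≤ δ|L|_σ` and
`|(F̄·L) ∖ K|_σ ≤ δ|K|_σ`, then
`Σ_{F×K×Lᶜ} d(X)²d(Y)² p_X(Y,Z) ≤ δ|F|_σ|L|_σ` and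
`Σ_{F×Kᶜ×L} d(X)²d(Y)² p_X(Y,Z) ≤ δ|F|_σ|K|_σ`; both triple sums have only
finitely many nonzero terms. -/
theorem graded_folner_inequality (𝕀 : GradedFusionDatum) (r s : Fin 2)
    (δ : ℝ) (hδ : 0 < δ)
    (F : Set (𝕀.I r s)) (K : Set (𝕀.I s 0)) (L : Set (𝕀.I r 0))
    (hF : F.Finite) (hK : K.Finite) (hL : L.Finite)
    (h1 : 𝕀.sigma (𝕀.mulSet F K \ L) ≤ δ * 𝕀.sigma L)
    (h2 : 𝕀.sigma (𝕀.mulSet (𝕀.conjSet F) L \ K) ≤ δ * 𝕀.sigma K) :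
    ({W : 𝕀.I r s × 𝕀.I s 0 × 𝕀.I r 0 |
        W.1 ∈ F ∧ W.2.1 ∈ K ∧ W.2.2 ∉ L ∧ 𝕀.p W.1 W.2.1 W.2.2 ≠ 0}.Finite ∧
     {W : 𝕀.I r s × 𝕀.I s 0 × 𝕀.I r 0 |
        W.1 ∈ F ∧ W.2.1 ∉ K ∧ W.2.2 ∈ L ∧ 𝕀.p W.1 W.2.1 W.2.2 ≠ 0}.Finite) ∧
    (∑ᶠ X ∈ F, ∑ᶠ Y ∈ K, ∑ᶠ Z ∈ Lᶜ, 𝕀.d X ^ 2 * 𝕀.d Y ^ 2 * 𝕀.p X Y Z)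
      ≤ δ * 𝕀.sigma F * 𝕀.sigma L ∧
    (∑ᶠ X ∈ F, ∑ᶠ Y ∈ Kᶜ, ∑ᶠ Z ∈ L, 𝕀.d X ^ 2 * 𝕀.d Y ^ 2 * 𝕀.p X Y Z)
      ≤ δ * 𝕀.sigma F * 𝕀.sigma K := by
    classical
  -- notation shortcuts
  have hp_ne : ∀ {r' s' t' : Fin 2} (X : 𝕀.I r' s') (Y : 𝕀.I s' t') (Z : 𝕀.I r' t'),
      𝕀.p X Y Z ≠ 0 → 𝕀.N X Y Z ≠ 0 := by
    intro _ _ _ X Y Z hp hN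
    exact hp (by unfold GradedFusionDatum.p; rw [hN]; simp)
  have hM : (𝕀.mulSet F K).Finite := 𝕀.mulSet_finite' hF hK
  have hM' : (𝕀.mulSet (𝕀.conjSet F) L).Finite := 𝕀.mulSet_finite' (hF.image _) hL
  have hMd : (𝕀.mulSet F K \ L).Finite := hM.subset Set.diff_subset
  have hMd' : (𝕀.mulSet (𝕀.conjSet F) L \ K).Finite := hM'.subset Set.diff_subset
  refine ⟨⟨?_, ?_⟩, ?_, ?_⟩
  · -- finiteness 1
    apply (hF.prod (hK.prod hM)).subset
    rintro ⟨X, Y, Z⟩ ⟨hX, hY, _, hp⟩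
    exact ⟨hX, hY, X, hX, Y, hY, hp_ne _ _ _ hp⟩
  · -- finiteness 2
    apply (hF.prod (hM'.prod hL)).subset
    rintro ⟨X, Y, Z⟩ ⟨hX, _, hZ, hp⟩
    exact ⟨hX, ⟨𝕀.conj X, ⟨X, hX, rfl⟩, Z, hZ, 𝕀.N_conj_ne' (hp_ne _ _ _ hp)⟩, hZ⟩
  · -- first inequality
    set T := hMd.toFinset with hT
    rw [finsum_mem_eq_finite_toFinset_sum _ hF]
    have e2 : ∀ X ∈ hF.toFinset, ∀ Y ∈ hK.toFinset,
        (∑ᶠ Z ∈ Lᶜ, 𝕀.d X ^ 2 * 𝕀.d Y ^ 2 * 𝕀.p X Y Z)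
          ≤ ∑ Z ∈ T, 𝕀.d X * 𝕀.d Y * (𝕀.d Z * (𝕀.N X Y Z : ℝ)) := by
      intro X hX Y hY
      rw [Set.Finite.mem_toFinset] at hX hY
      have hNne : ∀ Z : 𝕀.I r 0, 𝕀.d X ^ 2 * 𝕀.d Y ^ 2 * 𝕀.p X Y Z ≠ 0 →
          𝕀.N X Y Z ≠ 0 := by
        intro Z h hN
        exact h (by rw [𝕀.term_eq', hN]; simp)
      have hsup : (Lᶜ ∩ Function.support
          (fun Z => 𝕀.d X ^ 2 * 𝕀.d Y ^ 2 * 𝕀.p X Y Z)).Finite := by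
        apply hMd.subset
        rintro Z ⟨hZL, hZs⟩
        exact ⟨⟨X, hX, Y, hY, hNne Z hZs⟩, hZL⟩
      rw [finsum_mem_eq_sum _ hsup]
      have hsub : hsup.toFinset ⊆ T := by
        intro Z hZ
        rw [Set.Finite.mem_toFinset] at hZ ⊢
        rcases hZ with ⟨hZL, hZs⟩
        exact ⟨⟨X, hX, Y, hY, hNne Z hZs⟩, hZL⟩
      calc ∑ Z ∈ hsup.toFinset, 𝕀.d X ^ 2 * 𝕀.d Y ^ 2 * 𝕀.p X Y Z
          = ∑ Z ∈ hsup.toFinset, 𝕀.d X * 𝕀.d Y * (𝕀.d Z * (𝕀.N X Y Z : ℝ)) :=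
            Finset.sum_congr rfl fun Z _ => 𝕀.term_eq' X Y Z
        _ ≤ ∑ Z ∈ T, 𝕀.d X * 𝕀.d Y * (𝕀.d Z * (𝕀.N X Y Z : ℝ)) :=
            Finset.sum_le_sum_of_subset_of_nonneg hsub
              fun Z _ _ => 𝕀.term_nonneg' X Y Z
    calc ∑ X ∈ hF.toFinset, ∑ᶠ Y ∈ K, ∑ᶠ Z ∈ Lᶜ, 𝕀.d X ^ 2 * 𝕀.d Y ^ 2 * 𝕀.p X Y Z
        = ∑ X ∈ hF.toFinset, ∑ Y ∈ hK.toFinset,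
            ∑ᶠ Z ∈ Lᶜ, 𝕀.d X ^ 2 * 𝕀.d Y ^ 2 * 𝕀.p X Y Z :=
          Finset.sum_congr rfl fun X _ => finsum_mem_eq_finite_toFinset_sum _ hK
      _ ≤ ∑ X ∈ hF.toFinset, ∑ Y ∈ hK.toFinset,
            ∑ Z ∈ T, 𝕀.d X * 𝕀.d Y * (𝕀.d Z * (𝕀.N X Y Z : ℝ)) :=
          Finset.sum_le_sum fun X hX => Finset.sum_le_sum fun Y hY => e2 X hX Y hY
      _ ≤ (∑ X ∈ hF.toFinset, 𝕀.d X ^ 2) * ∑ Z ∈ T, 𝕀.d Z ^ 2 :=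
          𝕀.core_bound' hF.toFinset hK.toFinset T
      _ = 𝕀.sigma F * 𝕀.sigma (𝕀.mulSet F K \ L) := by
          rw [𝕀.sigma_eq_sum' hF, 𝕀.sigma_eq_sum' hMd]
      _ ≤ 𝕀.sigma F * (δ * 𝕀.sigma L) :=
          mul_le_mul_of_nonneg_left h1 (𝕀.sigma_nonneg_fin' hF)
      _ = δ * 𝕀.sigma F * 𝕀.sigma L := by ring
  · -- second inequality
    set T' := hMd'.toFinset with hT'
    rw [finsum_mem_eq_finite_toFinset_sum _ hF]
    have e2 : ∀ X ∈ hF.toFinset,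
        (∑ᶠ Y ∈ Kᶜ, ∑ᶠ Z ∈ L, 𝕀.d X ^ 2 * 𝕀.d Y ^ 2 * 𝕀.p X Y Z)
          ≤ ∑ Y ∈ T', ∑ Z ∈ hL.toFinset,
              𝕀.d X * 𝕀.d Y * (𝕀.d Z * (𝕀.N X Y Z : ℝ)) := by
      intro X hX
      rw [Set.Finite.mem_toFinset] at hX
      have hNne : ∀ (Y : 𝕀.I s 0) (Z : 𝕀.I r 0),
          𝕀.d X ^ 2 * 𝕀.d Y ^ 2 * 𝕀.p X Y Z ≠ 0 → 𝕀.N X Y Z ≠ 0 := by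
        intro Y Z h hN
        exact h (by rw [𝕀.term_eq', hN]; simp)
      have einner : ∀ Y : 𝕀.I s 0,
          (∑ᶠ Z ∈ L, 𝕀.d X ^ 2 * 𝕀.d Y ^ 2 * 𝕀.p X Y Z)
            = ∑ Z ∈ hL.toFinset, 𝕀.d X ^ 2 * 𝕀.d Y ^ 2 * 𝕀.p X Y Z :=
        fun Y => finsum_mem_eq_finite_toFinset_sum _ hL
      have hsup : (Kᶜ ∩ Function.support
          (fun Y => ∑ Z ∈ hL.toFinset, 𝕀.d X ^ 2 * 𝕀.d Y ^ 2 * 𝕀.p X Y Z)).Finite := by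
        apply hMd'.subset
        rintro Y ⟨hYK, hYs⟩
        rw [Function.mem_support] at hYs
        have : ∃ Z ∈ hL.toFinset, 𝕀.d X ^ 2 * 𝕀.d Y ^ 2 * 𝕀.p X Y Z ≠ 0 := by
          by_contra h
          push_neg at h
          exact hYs (Finset.sum_eq_zero h)
        obtain ⟨Z, hZ, hne⟩ := this
        rw [Set.Finite.mem_toFinset] at hZ
        exact ⟨⟨𝕀.conj X, ⟨X, hX, rfl⟩, Z, hZ, 𝕀.N_conj_ne' (hNne Y Z hne)⟩, hYK⟩
      have emid : (∑ᶠ Y ∈ Kᶜ, ∑ᶠ Z ∈ L, 𝕀.d X ^ 2 * 𝕀.d Y ^ 2 * 𝕀.p X Y Z)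
          = ∑ᶠ Y ∈ Kᶜ, ∑ Z ∈ hL.toFinset, 𝕀.d X ^ 2 * 𝕀.d Y ^ 2 * 𝕀.p X Y Z := by
        exact finsum_mem_congr rfl fun Y _ => einner Y
      rw [emid, finsum_mem_eq_sum _ hsup]
      have hsub : hsup.toFinset ⊆ T' := by
        intro Y hY
        rw [Set.Finite.mem_toFinset] at hY ⊢
        rcases hY with ⟨hYK, hYs⟩
        rw [Function.mem_support] at hYs
        have : ∃ Z ∈ hL.toFinset, 𝕀.d X ^ 2 * 𝕀.d Y ^ 2 * 𝕀.p X Y Z ≠ 0 := by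
          by_contra h
          push_neg at h
          exact hYs (Finset.sum_eq_zero h)
        obtain ⟨Z, hZ, hne⟩ := this
        rw [Set.Finite.mem_toFinset] at hZ
        exact ⟨⟨𝕀.conj X, ⟨X, hX, rfl⟩, Z, hZ, 𝕀.N_conj_ne' (hNne Y Z hne)⟩, hYK⟩
      calc ∑ Y ∈ hsup.toFinset, ∑ Z ∈ hL.toFinset, 𝕀.d X ^ 2 * 𝕀.d Y ^ 2 * 𝕀.p X Y Z
          = ∑ Y ∈ hsup.toFinset, ∑ Z ∈ hL.toFinset,
              𝕀.d X * 𝕀.d Y * (𝕀.d Z * (𝕀.N X Y Z : ℝ)) :=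
            Finset.sum_congr rfl fun Y _ =>
              Finset.sum_congr rfl fun Z _ => 𝕀.term_eq' X Y Z
        _ ≤ ∑ Y ∈ T', ∑ Z ∈ hL.toFinset,
              𝕀.d X * 𝕀.d Y * (𝕀.d Z * (𝕀.N X Y Z : ℝ)) :=
            Finset.sum_le_sum_of_subset_of_nonneg hsub fun Y _ _ =>
              Finset.sum_nonneg fun Z _ => 𝕀.term_nonneg' X Y Z
    have hconjinj : Function.Injective (fun X : 𝕀.I r s => 𝕀.conj X) := by
      intro a b h
      have := congrArg 𝕀.conj h
      simpa [𝕀.conj_conj] using this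
    calc ∑ X ∈ hF.toFinset, ∑ᶠ Y ∈ Kᶜ, ∑ᶠ Z ∈ L, 𝕀.d X ^ 2 * 𝕀.d Y ^ 2 * 𝕀.p X Y Z
        ≤ ∑ X ∈ hF.toFinset, ∑ Y ∈ T', ∑ Z ∈ hL.toFinset,
            𝕀.d X * 𝕀.d Y * (𝕀.d Z * (𝕀.N X Y Z : ℝ)) :=
          Finset.sum_le_sum fun X hX => e2 X hX
      _ = ∑ X ∈ hF.toFinset, ∑ Z ∈ hL.toFinset, ∑ Y ∈ T',
            𝕀.d (𝕀.conj X) * 𝕀.d Z * (𝕀.d Y * (𝕀.N (𝕀.conj X) Z Y : ℝ)) := by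
          refine Finset.sum_congr rfl fun X _ => ?_
          rw [Finset.sum_comm]
          refine Finset.sum_congr rfl fun Z _ => Finset.sum_congr rfl fun Y _ => ?_
          rw [𝕀.d_conj, ← 𝕀.frobenius_left]
          ring
      _ = ∑ X' ∈ hF.toFinset.image (fun X => 𝕀.conj X), ∑ Z ∈ hL.toFinset, ∑ Y ∈ T',
            𝕀.d X' * 𝕀.d Z * (𝕀.d Y * (𝕀.N X' Z Y : ℝ)) := by
          rw [Finset.sum_image (fun a _ b _ h => hconjinj h)]
      _ ≤ (∑ X' ∈ hF.toFinset.image (fun X => 𝕀.conj X), 𝕀.d X' ^ 2)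
            * ∑ Y ∈ T', 𝕀.d Y ^ 2 :=
          𝕀.core_bound' _ hL.toFinset T'
      _ = 𝕀.sigma F * 𝕀.sigma (𝕀.mulSet (𝕀.conjSet F) L \ K) := by
          rw [Finset.sum_image (fun a _ b _ h => hconjinj h)]
          rw [𝕀.sigma_eq_sum' hF, 𝕀.sigma_eq_sum' hMd']
          congr 1
          exact Finset.sum_congr rfl fun X _ => by rw [𝕀.d_conj]
      _ ≤ 𝕀.sigma F * (δ * 𝕀.sigma K) :=
          mul_le_mul_of_nonneg_left h2 (𝕀.sigma_nonneg_fin' hF)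
      _ = δ * 𝕀.sigma F * 𝕀.sigma K := by ring
end
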